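/- Let k ≥ 1, a ∈ ℂ \ {0}, and let R: D → ℂ be a continuous function on a disk around 0 ∈ ℂ with R(0) = 0. Define f(z) = a·z^k + |z|^k·R(z). Then there exists ε > 0 such that f(z) ≠ 0 for all 0 < |z| ≤ ε, and the winding number of the loop t ↦ f(ε·e^{2πit}) around 0 equals k. -/

import Mathlib

open Complex

/-- analytic core of Lemma 6.27. Let `k ≥ 1`, `a ∈ ℂ \ {0}`, and
`R` continuous on a disk of radius `r` around `0` with `R 0 = 0`.  Set
`f(z) = a·z^k + |z|^k·R(z)`.  Then there is `ε > 0` (with `ε < r`) such that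
`f(z) ≠ 0` for all `0 < |z| ≤ ε`, and the winding number of the loop
`t ↦ f(ε·e^{2πit})` around `0` equals `k`: there is a continuous polar lift
`f(ε e^{2πit}) = ρ(t)·e^{iθ(t)}` with `ρ > 0` and `θ(1) − θ(0) = 2πk`. -/
theorem stmt12 (k : ℕ) (hk : 1 ≤ k) (a : ℂ) (ha : a ≠ 0)
    (r : ℝ) (hr : 0 < r)
    (R : ℂ → ℂ) (hR : ContinuousOn R (Metric.ball 0 r)) (hR0 : R 0 = 0) :
    ∃ ε : ℝ, 0 < ε ∧ ε < r ∧
      (∀ z : ℂ, 0 < ‖z‖ → ‖z‖ ≤ ε →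
        a * z ^ k + (‖z‖ : ℂ) ^ k * R z ≠ 0) ∧
      ∃ ρ θ : ℝ → ℝ, Continuous ρ ∧ Continuous θ ∧ (∀ t, 0 < ρ t) ∧
        (∀ t : ℝ,
          a * ((ε : ℂ) * Complex.exp ((2 * Real.pi * t : ℝ) * Complex.I)) ^ k +
              (‖(ε : ℂ) * Complex.exp ((2 * Real.pi * t : ℝ) * Complex.I)‖ : ℂ) ^ k *
                R ((ε : ℂ) * Complex.exp ((2 * Real.pi * t : ℝ) * Complex.I)) =
            (ρ t : ℂ) * Complex.exp ((θ t : ℝ) * Complex.I)) ∧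
        θ 1 - θ 0 = 2 * Real.pi * k := by
  have ha' : 0 < ‖a‖ := norm_pos_iff.mpr ha
  obtain ⟨δ, hδ, hδR⟩ :=
    (Metric.continuousWithinAt_iff.mp (hR 0 (Metric.mem_ball_self hr))) (‖a‖ / 2)
      (by positivity)
  set ε := min (δ / 2) (r / 2) with hεdef
  have hε0 : 0 < ε := lt_min (by linarith) (by linarith)
  have hεr : ε < r := lt_of_le_of_lt (min_le_right _ _) (by linarith)
  have hεδ : ε < δ := lt_of_le_of_lt (min_le_left _ _) (by linarith)
  have hRb : ∀ z : ℂ, ‖z‖ ≤ ε → ‖R z‖ ≤ ‖a‖ / 2 := by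
    intro z hz
    have hzr : ‖z‖ < r := lt_of_le_of_lt hz hεr
    have hzball : z ∈ Metric.ball (0 : ℂ) r := by
      simpa [Metric.mem_ball, Complex.dist_eq] using hzr
    have := hδR hzball (by simpa [Complex.dist_eq] using lt_of_le_of_lt hz hεδ)
    rw [hR0] at this
    simpa [Complex.dist_eq] using this.le
  have hnv : ∀ z : ℂ, 0 < ‖z‖ → ‖z‖ ≤ ε →
      a * z ^ k + (‖z‖ : ℂ) ^ k * R z ≠ 0 := by
    intro z hz0 hzε H
    have h1 : a * z ^ k = -((‖z‖ : ℂ) ^ k * R z) := by linear_combination H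
    have h2 : ‖a‖ * ‖z‖ ^ k = ‖z‖ ^ k * ‖R z‖ := by
      have := congrArg norm h1
      simpa [norm_mul, norm_pow, Complex.norm_real, _root_.abs_of_nonneg (norm_nonneg z)]
        using this
    have hzk : 0 < ‖z‖ ^ k := pow_pos hz0 k
    have h3 : ‖a‖ = ‖R z‖ := by
      have h2' : ‖z‖ ^ k * ‖a‖ = ‖z‖ ^ k * ‖R z‖ := by
        linarith
      exact mul_left_cancel₀ (ne_of_gt hzk) h2'
    have := hRb z hzε
    rw [← h3] at this
    linarith
  refine ⟨ε, hε0, hεr, hnv, ?_⟩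
  set u : ℝ → ℂ := fun t => Complex.exp (((2 * Real.pi * t : ℝ) : ℂ) * Complex.I) with hu
  have huabs : ∀ t, ‖u t‖ = 1 := fun t => Complex.norm_exp_ofReal_mul_I _
  have hune : ∀ t, u t ≠ 0 := fun t => Complex.exp_ne_zero _
  set c : ℝ → ℂ := fun t => (ε : ℂ) * u t with hc
  have hcabs : ∀ t, ‖c t‖ = ε := by
    intro t
    simp [hc, huabs, abs_of_pos hε0]
  set h : ℝ → ℂ := fun t => 1 + R (c t) / (a * u t ^ k) with hh
  have hhub : ∀ t, ‖h t - 1‖ ≤ 1 / 2 := by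
    intro t
    have : h t - 1 = R (c t) / (a * u t ^ k) := by rw [hh]; ring
    rw [this, norm_div, norm_mul, norm_pow, huabs, one_pow, mul_one, div_le_iff₀ ha']
    have := hRb (c t) (le_of_eq (hcabs t))
    linarith
  have hre : ∀ t, (1 : ℝ) / 2 ≤ (h t).re := by
    intro t
    have h2 : |(h t).re - 1| ≤ 1 / 2 := by
      have := le_trans (Complex.abs_re_le_norm (h t - 1)) (hhub t)
      simpa [Complex.sub_re] using this
    linarith [(abs_le.mp h2).1]
  have habs : ∀ t, (1 : ℝ) / 2 ≤ ‖h t‖ := fun t =>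
    le_trans (hre t) (Complex.re_le_norm _)
  have huCont : Continuous u := by
    rw [hu]; fun_prop
  have hcCont : Continuous c := by
    rw [hc]; fun_prop
  have hmaps : ∀ t, c t ∈ Metric.ball (0 : ℂ) r := by
    intro t
    simp only [Metric.mem_ball, Complex.dist_eq, sub_zero]
    rw [hcabs]
    exact hεr
  have hRcCont : Continuous fun t => R (c t) := hR.comp_continuous hcCont hmaps
  have hhCont : Continuous h := by
    rw [hh]
    exact continuous_const.add
      (hRcCont.div (continuous_const.mul (huCont.pow k))
        (fun t => mul_ne_zero ha (pow_ne_zero _ (hune t))))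
  have hargCont : Continuous fun t => Complex.arg (h t) := by
    rw [continuous_iff_continuousAt]
    intro t
    exact (Complex.continuousAt_arg (Complex.mem_slitPlane_iff.mpr
      (Or.inl (lt_of_lt_of_le (by norm_num) (hre t))))).comp hhCont.continuousAt
  have hu1 : u 1 = 1 := by
    have e1 : ((2 * Real.pi * (1 : ℝ) : ℝ) : ℂ) * Complex.I = 2 * (Real.pi : ℂ) * Complex.I := by
      push_cast; ring
    rw [hu]
    simp only [e1]
    exact Complex.exp_two_pi_mul_I
  have hu0 : u 0 = 1 := by
    rw [hu]
    norm_num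
  have hc10 : c 1 = c 0 := by rw [hc]; simp [hu1, hu0]
  have hh10 : h 1 = h 0 := by
    rw [hh]
    simp only [hc10, hu1, hu0]
  refine ⟨fun t => ε ^ k * ‖a‖ * ‖h t‖,
      fun t => 2 * Real.pi * k * t + Complex.arg a + Complex.arg (h t), ?_, ?_, ?_, ?_, ?_⟩
  · exact continuous_const.mul (continuous_norm.comp hhCont)
  · exact ((continuous_const.mul continuous_id).add continuous_const).add hargCont
  · intro t
    have := habs t
    have : (0:ℝ) < ‖h t‖ := by linarith
    positivity
  · intro t
    have huk : u t ^ k = Complex.exp (((2 * Real.pi * (k : ℝ) * t : ℝ) : ℂ) * Complex.I) := by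
      rw [hu, ← Complex.exp_nat_mul]
      congr 1
      push_cast
      ring
    have key : a * c t ^ k + ((‖c t‖ : ℝ) : ℂ) ^ k * R (c t) = a * c t ^ k * h t := by
      rw [hcabs, hh, hc, mul_pow]
      field_simp [ha, pow_ne_zero k (hune t)]
    calc a * c t ^ k + ((‖c t‖ : ℝ) : ℂ) ^ k * R (c t)
        = a * c t ^ k * h t := key
      _ = ((ε ^ k * ‖a‖ * ‖h t‖ : ℝ) : ℂ) *
            Complex.exp (((2 * Real.pi * k * t + Complex.arg a + Complex.arg (h t) : ℝ) : ℂ)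
              * Complex.I) := by
          conv_lhs => rw [← Complex.norm_mul_exp_arg_mul_I a, ← Complex.norm_mul_exp_arg_mul_I (h t)]
          rw [hc, mul_pow, huk]
          push_cast
          rw [add_mul, add_mul, Complex.exp_add, Complex.exp_add]
          ring
  · show 2 * Real.pi * k * 1 + Complex.arg a + Complex.arg (h 1)
        - (2 * Real.pi * k * 0 + Complex.arg a + Complex.arg (h 0)) = 2 * Real.pi * k
    rw [hh10]
    ring
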